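/- If f : O → ℝ is Haar-integrable and has finite Berkovich-analytic variation V_Berk(f) < +∞, then there exists a unique continuous function g : O → ℝ such that f(x) = g(x) for Haar-almost all x ∈ O. -/

import Mathlib

open MeasureTheory Set Filter Topology
open scoped ENNReal NNReal

noncomputable section

namespace NAKoksma

variable (K : Type*) [NontriviallyNormedField K] [IsUltrametricDist K]

/-- The ring of integers `O = {x : K | ‖x‖ ≤ 1}` of a non-Archimedean normed field. -/
def RoI : Subring K where
  carrier := {x : K | ‖x‖ ≤ 1}
  mul_mem' := fun {a b} ha hb => by
    simp only [Set.mem_setOf_eq] at *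
    calc ‖a * b‖ = ‖a‖ * ‖b‖ := norm_mul a b
      _ ≤ 1 * 1 := mul_le_mul ha hb (norm_nonneg b) zero_le_one
      _ = 1 := one_mul 1
  one_mem' := by simp
  add_mem' := fun {a b} ha hb => by
    simp only [Set.mem_setOf_eq] at *
    exact (IsUltrametricDist.norm_add_le_max a b).trans (max_le ha hb)
  zero_mem' := by simp
  neg_mem' := fun {a} ha => by
    simp only [Set.mem_setOf_eq, norm_neg] at *
    exact ha

variable (q : ℕ)

/-- The disc of radius `q ^ (-n)` centered at `a` in the ring of integers. -/
def disc (a : RoI K) (n : ℕ) : Set (RoI K) :=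
  {x : RoI K | ‖(x : K) - (a : K)‖ ≤ (q : ℝ) ^ (-(n : ℤ))}

/-- A subset of `O` is a disc if it is of the form `D_r(a)` with `r = q^(-n)`, `0 < r ≤ 1`. -/
def IsDisc (D : Set (RoI K)) : Prop := ∃ (a : RoI K) (n : ℕ), D = disc K q a n

/-- A Taibleson partition: a finite collection of discs partitioning `O`. -/
def IsTaibPartition (P : Finset (Set (RoI K))) : Prop :=
  (∀ D ∈ P, IsDisc K q D) ∧ (P : Set (Set (RoI K))).PairwiseDisjoint id ∧
    ⋃₀ (P : Set (Set (RoI K))) = Set.univ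

/-- `V_Π(f) = Σ_{D ∈ Π} sup_{x,y ∈ D} (f x - f y)`, valued in `[0,∞]`. -/
def VPi (f : RoI K → ℝ) (P : Finset (Set (RoI K))) : ℝ≥0∞ :=
  ∑ D ∈ P, ⨆ x ∈ D, ⨆ y ∈ D, ENNReal.ofReal (f x - f y)

/-- The Taibleson variation `V_Taib(f) = sup_Π V_Π(f)`. -/
def VTaib (f : RoI K → ℝ) : ℝ≥0∞ :=
  ⨆ P : {P : Finset (Set (RoI K)) // IsTaibPartition K q P}, VPi K f P.1

variable [MeasurableSpace K]

/-- The discrepancy `Δ(X) = sup_D | |X ∩ D| / |X| - μ(D) |` of a finite set `X ⊆ O`. -/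
def discrepancy (μ : Measure (RoI K)) (X : Finset (RoI K)) : ℝ :=
  ⨆ D : {D : Set (RoI K) // IsDisc K q D},
    |(Nat.card ↥((X : Set (RoI K)) ∩ D.1) : ℝ) / (X.card : ℝ) - (μ D.1).toReal|

variable (π : RoI K)

/-- The `i`-th point `m_i = a_0 + a_1 π + ⋯ + a_{λ-1} π^{λ-1}` in the dictionary
ordering of the coefficient strings `(a_0, …, a_{λ-1})` with respect to the
indexing of the coset representatives `S`. -/
def beerPoint (S : ℕ → RoI K) (lam i : ℕ) : RoI K :=
  ∑ j ∈ Finset.range lam, S (i / q ^ (lam - 1 - j) % q) * π ^ j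

/-- `V_λ(f) = sup_{x_i ∈ E_i} Σ_{i=1}^{q^λ - 1} |f(x_i) - f(x_{i-1})|` over the ordered Beer
partition `E_0, …, E_{q^λ - 1}` of level `λ`. -/
def VBeerLevel (S : ℕ → RoI K) (f : RoI K → ℝ) (lam : ℕ) : ℝ≥0∞ :=
  ⨆ x : {x : ℕ → RoI K // ∀ i < q ^ lam, x i ∈ disc K q (beerPoint K q π S lam i) lam},
    ∑ i ∈ Finset.Ico 1 (q ^ lam), ENNReal.ofReal |f (x.1 i) - f (x.1 (i - 1))|

/-- The Beer variation `V_Beer(f) = lim_{λ→∞} V_λ(f) = sup_{λ ≥ 1} V_λ(f)`. -/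
def VBeer (S : ℕ → RoI K) (f : RoI K → ℝ) : ℝ≥0∞ :=
  ⨆ lam : ℕ, VBeerLevel K q π S f (lam + 1)

/-- `S : ℕ → O` (through indices `0, …, q-1`) is a complete ordered system of coset
representatives for the residue field `O/πO`, containing `0`. -/
def IsRepSystem (S : ℕ → RoI K) : Prop :=
  (∃ i, i < q ∧ S i = 0) ∧
    Function.Bijective fun i : Fin q => Ideal.Quotient.mk (Ideal.span {π}) (S (i : ℕ))

/-- The Berkovich-analytic variation
`V_Berk(f) = Σ_D Σ_{D' ≺ D} |f(D') - f(D)|`, where `D' ≺ D` means `D' ⊆ D` and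
`μ(D') = μ(D)/q`, and `f(D)` denotes the average of `f` over `D`. -/
def VBerk (μ : Measure (RoI K)) (f : RoI K → ℝ) : ℝ≥0∞ :=
  ∑' D : {D : Set (RoI K) // IsDisc K q D},
    ∑' D' : {D' : Set (RoI K) // IsDisc K q D' ∧ D' ⊆ D.1 ∧ μ D' = μ D.1 / (q : ℝ≥0∞)},
      ENNReal.ofReal |(⨍ x in D'.1, f x ∂μ) - ⨍ x in D.1, f x ∂μ|

/-- The level `ℓ(γ)` of a character `γ : O → 𝕋`: the least `ℓ ≥ 0` such that `γ` is trivial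
on `π^ℓ O`. -/
def charLevel (γ : AddChar (RoI K) Circle) : ℕ :=
  sInf {l : ℕ | ∀ y : RoI K, γ (π ^ l * y) = 1}

/-- The Fourier coefficient `f̂(γ) = ∫_O f(x) conj(γ(x)) dμ(x)`. -/
def fourierCoeff (μ : Measure (RoI K)) (f : RoI K → ℂ) (γ : AddChar (RoI K) Circle) : ℂ :=
  ∫ x, f x * (starRingEnd ℂ) ((γ x : Circle) : ℂ) ∂μ

/-- The Fourier-analytic variation `V_Fourier(f) = Σ_{γ ≠ γ₀} q^{ℓ(γ)} |f̂(γ)|`, the sum over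
all nontrivial continuous characters of `O`. -/
def VFourier (μ : Measure (RoI K)) (f : RoI K → ℝ) : ℝ≥0∞ :=
  ∑' γ : {γ : AddChar (RoI K) Circle // Continuous ⇑γ ∧ γ ≠ 1},
    ENNReal.ofReal ((q : ℝ) ^ charLevel K π γ.1 * ‖fourierCoeff K μ (fun x => (f x : ℂ)) γ.1‖)

/-- A function is a finite linear combination of characteristic functions of discs. -/
def IsDiscSimple (g : RoI K → ℝ) : Prop :=
  ∃ (P : Finset (Set (RoI K))) (c : Set (RoI K) → ℝ),
    (∀ D ∈ P, IsDisc K q D) ∧ g = fun x => ∑ D ∈ P, c D * D.indicator 1 x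

/-- Integrability in the sense of Beer: `f` can be squeezed between finite linear combinations
of characteristic functions of discs with integrals converging to each other. -/
def BeerIntegrable [MeasurableSpace K] (μ : Measure (RoI K)) (f : RoI K → ℝ) : Prop :=
  ∃ u v : ℕ → RoI K → ℝ,
    (∀ n, IsDiscSimple K q (u n)) ∧ (∀ n, IsDiscSimple K q (v n)) ∧
    (∀ n x, u n x ≤ f x ∧ f x ≤ v n x) ∧
    Tendsto (fun n => ∫ x, (v n x - u n x) ∂μ) atTop (𝓝 0)

variable [LocallyCompactSpace K] [BorelSpace K]

section Aux

variable {K q} {π : RoI K}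

omit [MeasurableSpace K] [LocallyCompactSpace K] [BorelSpace K]

lemma radius_pos (hq : 1 < q) (n : ℕ) : (0:ℝ) < (q : ℝ) ^ (-(n : ℤ)) :=
  zpow_pos (by exact_mod_cast Nat.lt_of_lt_of_le Nat.zero_lt_one hq.le) _

lemma mem_disc_self (hq : 1 < q) (a : RoI K) (n : ℕ) : a ∈ disc K q a n := by
  simp only [disc, Set.mem_setOf_eq, sub_self, norm_zero]
  exact (radius_pos hq n).le

lemma disc_eq_closedBall (a : RoI K) (n : ℕ) :
    disc K q a n = Metric.closedBall a ((q : ℝ) ^ (-(n : ℤ))) := by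
  ext x
  simp only [disc, Set.mem_setOf_eq, Metric.mem_closedBall, Subtype.dist_eq, dist_eq_norm]
  rfl

lemma disc_antitone (hq : 1 < q) (a : RoI K) {m n : ℕ} (h : m ≤ n) :
    disc K q a n ⊆ disc K q a m := by
  intro x hx
  have hle : ((q:ℝ)) ^ (-(n:ℤ)) ≤ (q:ℝ) ^ (-(m:ℤ)) :=
    zpow_le_zpow_right₀ (by exact_mod_cast hq.le) (by omega)
  exact le_trans hx hle

lemma disc_eq_of_mem (hq : 1 < q) {a x : RoI K} {n : ℕ} (hx : x ∈ disc K q a n) :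
    disc K q x n = disc K q a n := by
  ext z
  simp only [disc, Set.mem_setOf_eq] at *
  constructor
  · intro hz
    have := IsUltrametricDist.norm_add_le_max ((z : K) - x) ((x : K) - a)
    simp only [sub_add_sub_cancel] at this
    exact this.trans (max_le hz hx)
  · intro hz
    have := IsUltrametricDist.norm_add_le_max ((z : K) - a) ((a : K) - x)
    simp only [sub_add_sub_cancel] at this
    have hax : ‖(a : K) - x‖ ≤ (q:ℝ) ^ (-(n:ℤ)) := by rwa [norm_sub_rev]
    exact this.trans (max_le hz hax)

lemma norm_le_one (x : RoI K) : ‖(x : K)‖ ≤ 1 := x.2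

lemma inv_pow_eq_zpow (n : ℕ) : ((q:ℝ)⁻¹) ^ n = (q:ℝ) ^ (-(n : ℤ)) := by
  rw [inv_pow, ← zpow_natCast (q:ℝ) n, ← zpow_neg]

lemma q_pos_real (hq : 1 < q) : (0:ℝ) < (q:ℝ) := by exact_mod_cast Nat.lt_of_lt_of_le Nat.zero_lt_one hq.le

lemma pi_ne_zero (hq : 1 < q) (hπ : ‖(π : K)‖ = (q : ℝ)⁻¹) : (π : K) ≠ 0 := by
  intro h
  rw [h, norm_zero] at hπ
  exact absurd hπ.symm (ne_of_gt (inv_pos.mpr (q_pos_real hq)))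

lemma norm_pi_pow (hq : 1 < q) (hπ : ‖(π : K)‖ = (q : ℝ)⁻¹) (n : ℕ) :
    ‖((π : K)) ^ n‖ = (q : ℝ) ^ (-(n : ℤ)) := by
  rw [norm_pow, hπ, inv_pow_eq_zpow]

/-- Factor out `π^n` from an element of norm at most `q^{-n}`. -/
lemma exists_factor (hq : 1 < q) (hπ : ‖(π : K)‖ = (q : ℝ)⁻¹) {x : RoI K} {n : ℕ}
    (hx : ‖(x : K)‖ ≤ (q : ℝ) ^ (-(n : ℤ))) :
    ∃ y : RoI K, x = π ^ n * y ∧ ‖(y : K)‖ = ‖(x : K)‖ * (q : ℝ) ^ (n : ℤ) := by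
  have hπn : ‖((π : K)) ^ n‖ = (q : ℝ) ^ (-(n : ℤ)) := norm_pi_pow hq hπ n
  have hπn0 : ((π : K)) ^ n ≠ 0 := pow_ne_zero _ (pi_ne_zero hq hπ)
  have hynorm : ‖(x : K) / ((π : K)) ^ n‖ = ‖(x : K)‖ * (q : ℝ) ^ (n : ℤ) := by
    rw [norm_div, hπn, div_eq_mul_inv, ← zpow_neg, neg_neg]
  have hy1 : ‖(x : K) / ((π : K)) ^ n‖ ≤ 1 := by
    rw [hynorm]
    calc ‖(x : K)‖ * (q : ℝ) ^ (n : ℤ) ≤ (q : ℝ) ^ (-(n : ℤ)) * (q : ℝ) ^ (n : ℤ) := by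
          apply mul_le_mul_of_nonneg_right hx (le_of_lt (zpow_pos (q_pos_real hq) _))
      _ = 1 := by rw [← zpow_add₀ (ne_of_gt (q_pos_real hq))]; simp
  refine ⟨⟨(x : K) / ((π : K)) ^ n, hy1⟩, ?_, hynorm⟩
  apply Subtype.ext
  push_cast
  field_simp

/-- Norms of nonzero elements of `O` are powers `q^{-k}`. -/
lemma norm_discrete (hq : 1 < q) (hπ : ‖(π : K)‖ = (q : ℝ)⁻¹)
    (hunif : ∀ x : RoI K, ‖(x : K)‖ < 1 → ‖(x : K)‖ ≤ ‖(π : K)‖)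
    (x : RoI K) (hx : (x : K) ≠ 0) : ∃ k : ℕ, ‖(x : K)‖ = (q : ℝ) ^ (-(k : ℤ)) := by
  have hxpos : 0 < ‖(x : K)‖ := norm_pos_iff.mpr hx
  have hqi : (q : ℝ)⁻¹ < 1 := inv_lt_one_of_one_lt₀ (by exact_mod_cast hq)
  have hex : ∃ k : ℕ, (q : ℝ) ^ (-((k:ℕ) + 1 : ℤ)) < ‖(x : K)‖ := by
    obtain ⟨k, hk⟩ := exists_pow_lt_of_lt_one hxpos hqi
    refine ⟨k, lt_of_le_of_lt ?_ hk⟩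
    rw [inv_pow_eq_zpow]
    exact zpow_le_zpow_right₀ (by exact_mod_cast hq.le) (by omega)
  classical
  let k := Nat.find hex
  have hk1 : (q : ℝ) ^ (-((k:ℕ) + 1 : ℤ)) < ‖(x : K)‖ := Nat.find_spec hex
  have hk2 : ‖(x : K)‖ ≤ (q : ℝ) ^ (-(k : ℤ)) := by
    rcases Nat.eq_zero_or_pos k with h0 | hpos
    · rw [h0]; simp only [Nat.cast_zero, neg_zero, zpow_zero]; exact norm_le_one x
    · have := Nat.find_min hex (Nat.sub_lt hpos Nat.one_pos)
      push_neg at this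
      have heq : (-(((k - 1 : ℕ):ℤ) + 1)) = -(k : ℤ) := by omega
      rw [heq] at this
      exact this
  refine ⟨k, le_antisymm hk2 ?_⟩
  by_contra hlt
  push_neg at hlt
  obtain ⟨y, hxy, hynorm⟩ := exists_factor hq hπ hk2
  have hy1 : ‖(y : K)‖ < 1 := by
    rw [hynorm]
    calc ‖(x : K)‖ * (q : ℝ) ^ (k : ℤ) < (q : ℝ) ^ (-(k : ℤ)) * (q : ℝ) ^ (k : ℤ) :=
        mul_lt_mul_of_pos_right hlt (zpow_pos (q_pos_real hq) _)
      _ = 1 := by rw [← zpow_add₀ (ne_of_gt (q_pos_real hq))]; simp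
  have hy2 : ‖(y : K)‖ ≤ (q:ℝ)⁻¹ := hπ ▸ hunif y hy1
  have : ‖(x : K)‖ ≤ (q : ℝ) ^ (-((k:ℕ) + 1 : ℤ)) := by
    have hxn : ‖(x : K)‖ = (q : ℝ) ^ (-(k : ℤ)) * ‖(y : K)‖ := by
      rw [hxy]
      push_cast
      rw [norm_mul, norm_pi_pow hq hπ]
    rw [hxn]
    calc (q : ℝ) ^ (-(k : ℤ)) * ‖(y : K)‖ ≤ (q : ℝ) ^ (-(k : ℤ)) * (q:ℝ)⁻¹ :=
        mul_le_mul_of_nonneg_left hy2 (le_of_lt (zpow_pos (q_pos_real hq) _))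
      _ = (q : ℝ) ^ (-((k:ℕ) + 1 : ℤ)) := by
        rw [← zpow_neg_one, ← zpow_add₀ (ne_of_gt (q_pos_real hq))]
        ring_nf
  exact absurd hk1 (not_lt.mpr this)

lemma mem_span_iff_norm (hq : 1 < q) (hπ : ‖(π : K)‖ = (q : ℝ)⁻¹) (x : RoI K) :
    x ∈ (Ideal.span {π} : Ideal (RoI K)) ↔ ‖(x : K)‖ ≤ (q : ℝ) ^ (-(1 : ℤ)) := by
  rw [Ideal.mem_span_singleton]
  constructor
  · rintro ⟨y, rfl⟩
    push_cast
    rw [norm_mul, hπ]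
    calc (q:ℝ)⁻¹ * ‖(y : K)‖ ≤ (q:ℝ)⁻¹ * 1 :=
        mul_le_mul_of_nonneg_left (norm_le_one y) (le_of_lt (inv_pos.mpr (q_pos_real hq)))
      _ = (q : ℝ) ^ (-(1:ℤ)) := by rw [mul_one, zpow_neg_one]
  · intro hx
    have hx' : ‖(x : K)‖ ≤ (q : ℝ) ^ (-((1:ℕ) : ℤ)) := by exact_mod_cast hx
    obtain ⟨y, hxy, -⟩ := exists_factor hq hπ hx'
    exact ⟨y, by rw [hxy, pow_one]⟩

lemma isClosed_disc (a : RoI K) (n : ℕ) : IsClosed (disc K q a n) := by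
  have : disc K q a n = (fun x : RoI K => ‖(x : K) - (a : K)‖) ⁻¹' (Set.Iic ((q : ℝ) ^ (-(n : ℤ)))) := rfl
  rw [this]
  exact IsClosed.preimage (by fun_prop) isClosed_Iic

/-- Translation of discs. -/
lemma disc_translate (a c : RoI K) (n : ℕ) :
    disc K q a n = (fun x : RoI K => (a - c) + x) '' disc K q c n := by
  ext x
  simp only [disc, Set.mem_image, Set.mem_setOf_eq]
  constructor
  · intro hx
    refine ⟨x - (a - c), ?_, by ring⟩
    have h1 : ((x - (a - c) : RoI K) : K) - (c : K) = (x : K) - (a : K) := by push_cast; ring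
    rw [h1]; exact hx
  · rintro ⟨y, hy, rfl⟩
    have h1 : (((a - c) + y : RoI K) : K) - (a : K) = (y : K) - (c : K) := by push_cast; ring
    rw [h1]; exact hy
end Aux

section Aux2

variable {K q} {π : RoI K}

omit [LocallyCompactSpace K]

set_option synthInstance.maxHeartbeats 1000000
set_option maxHeartbeats 1000000

instance instBorelSpaceRoI : BorelSpace (RoI K) :=
  Subtype.borelSpace {x : K | x ∈ RoI K}

lemma measurableSet_disc (a : RoI K) (n : ℕ) : MeasurableSet (disc K q a n) :=
  (isClosed_disc a n).measurableSet

lemma measure_disc_eq_of_center (μ : Measure (RoI K)) [μ.IsAddLeftInvariant]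
    (a c : RoI K) (n : ℕ) : μ (disc K q a n) = μ (disc K q c n) := by
  rw [disc_translate a c n]
  have himg : (fun x : RoI K => (a - c) + x) '' disc K q c n
      = (fun x : RoI K => (c - a) + x) ⁻¹' disc K q c n := by
    ext x
    simp only [Set.mem_image, Set.mem_preimage]
    constructor
    · rintro ⟨y, hy, rfl⟩
      have : (c - a) + ((a - c) + y) = y := by ring
      rw [this]; exact hy
    · intro h
      exact ⟨(c - a) + x, h, by ring⟩
  rw [himg, measure_preimage_add]

/-- Every disc of level `n` is partitioned into `q` discs of level `n+1`. -/
lemma measure_disc_succ (hq : 1 < q) (hπ : ‖(π : K)‖ = (q : ℝ)⁻¹)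
    (hres : Nat.card (↥(RoI K) ⧸ (Ideal.span {π} : Ideal ↥(RoI K))) = q)
    (μ : Measure (RoI K)) [μ.IsAddLeftInvariant]
    (c : RoI K) (n : ℕ) :
    μ (disc K q c n) = q * μ (disc K q 0 (n + 1)) := by
  classical
  set I : Ideal (RoI K) := Ideal.span {π} with hI
  haveI : Finite (RoI K ⧸ I) := Nat.finite_of_card_ne_zero (by rw [hres]; omega)
  obtain ⟨e⟩ : Nonempty ((RoI K ⧸ I) ≃ Fin q) := by
    exact ⟨Finite.equivFinOfCardEq hres⟩
  choose r hr using fun i : Fin q => Ideal.Quotient.mk_surjective (I := I) (e.symm i)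
  set D : Fin q → Set (RoI K) := fun i => disc K q (c + π ^ n * r i) (n + 1) with hD
  have hnormpi : ∀ (z : RoI K), ‖((π ^ n * z : RoI K) : K)‖ = (q:ℝ) ^ (-(n:ℤ)) * ‖(z : K)‖ := by
    intro z
    push_cast
    rw [norm_mul, norm_pi_pow hq hπ]
  have hsub : ∀ i, D i ⊆ disc K q c n := by
    intro i x hx
    have h1 : ‖(x : K) - ((c : K) + (π : K) ^ n * (r i : K))‖ ≤ (q:ℝ) ^ (-((n:ℕ)+1 : ℤ)) := by
      exact_mod_cast hx
    have h2 : ‖(π : K) ^ n * (r i : K)‖ ≤ (q:ℝ) ^ (-(n:ℤ)) := by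
      rw [norm_mul, norm_pi_pow hq hπ]
      calc (q:ℝ) ^ (-(n:ℤ)) * ‖(r i : K)‖ ≤ (q:ℝ) ^ (-(n:ℤ)) * 1 :=
          mul_le_mul_of_nonneg_left (norm_le_one _) (radius_pos hq n).le
        _ = (q:ℝ) ^ (-(n:ℤ)) := mul_one _
    have h3 := IsUltrametricDist.norm_add_le_max
      ((x : K) - ((c : K) + (π : K) ^ n * (r i : K))) ((π : K) ^ n * (r i : K))
    have h4 : (x : K) - ((c : K) + (π : K) ^ n * (r i : K)) + (π : K) ^ n * (r i : K)
        = (x : K) - (c : K) := by ring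
    rw [h4] at h3
    refine h3.trans (max_le (h1.trans ?_) h2)
    exact zpow_le_zpow_right₀ (by exact_mod_cast hq.le) (by omega)
  have hcover : disc K q c n = ⋃ i, D i := by
    refine Set.Subset.antisymm ?_ (Set.iUnion_subset hsub)
    intro x hx
    have hx' : ‖((x - c : RoI K) : K)‖ ≤ (q:ℝ) ^ (-(n:ℤ)) := by
      push_cast
      exact hx
    obtain ⟨z, hz, -⟩ := exists_factor hq hπ hx'
    set i := e (Ideal.Quotient.mk I z) with hi
    have hmk : Ideal.Quotient.mk I (r i) = Ideal.Quotient.mk I z := by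
      rw [hr, hi, Equiv.symm_apply_apply]
    have hzr : z - r i ∈ I := by
      rw [← Ideal.Quotient.eq_zero_iff_mem, map_sub, hmk, sub_self]
    have hzrn : ‖((z - r i : RoI K) : K)‖ ≤ (q : ℝ) ^ (-(1 : ℤ)) :=
      (mem_span_iff_norm hq hπ _).mp hzr
    refine Set.mem_iUnion.mpr ⟨i, ?_⟩
    show ‖(x : K) - ((c + π ^ n * r i : RoI K) : K)‖ ≤ (q:ℝ) ^ (-((n:ℕ)+1 : ℤ))
    have hxz : (x : K) - (c : K) = ((π ^ n * z : RoI K) : K) := by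
      have := congrArg (Subtype.val) hz
      push_cast at this ⊢
      rw [← this]
    have key : (x : K) - ((c + π ^ n * r i : RoI K) : K) = ((π ^ n * (z - r i) : RoI K) : K) := by
      push_cast at hxz ⊢
      rw [mul_sub, ← hxz]
      ring
    rw [key, hnormpi]
    calc (q:ℝ) ^ (-(n:ℤ)) * ‖((z - r i : RoI K) : K)‖
        ≤ (q:ℝ) ^ (-(n:ℤ)) * (q : ℝ) ^ (-(1 : ℤ)) :=
          mul_le_mul_of_nonneg_left hzrn (radius_pos hq n).le
      _ = (q:ℝ) ^ (-((n:ℕ)+1 : ℤ)) := by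
          rw [← zpow_add₀ (ne_of_gt (q_pos_real hq))]
          ring_nf
  have hdisj : Pairwise (Function.onFun Disjoint D) := by
    intro i j hij
    rw [Function.onFun, Set.disjoint_left]
    intro x hxi hxj
    apply hij
    have hmem : (c + π ^ n * r i) ∈ disc K q (c + π ^ n * r j) (n+1) := by
      have h1 : ‖(x : K) - ((c + π ^ n * r i : RoI K) : K)‖ ≤ (q:ℝ) ^ (-((n:ℕ)+1 : ℤ)) := by
        exact_mod_cast hxi
      have h2 : ‖(x : K) - ((c + π ^ n * r j : RoI K) : K)‖ ≤ (q:ℝ) ^ (-((n:ℕ)+1 : ℤ)) := by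
        exact_mod_cast hxj
      show ‖((c + π ^ n * r i : RoI K) : K) - ((c + π ^ n * r j : RoI K) : K)‖
        ≤ (q:ℝ) ^ (-((n:ℕ)+1 : ℤ))
      have h3 := IsUltrametricDist.norm_add_le_max
        (((c + π ^ n * r i : RoI K) : K) - (x : K)) ((x : K) - ((c + π ^ n * r j : RoI K) : K))
      rw [sub_add_sub_cancel] at h3
      refine h3.trans (max_le ?_ h2)
      rw [norm_sub_rev]; exact h1
    have hij' : ‖((r i - r j : RoI K) : K)‖ ≤ (q : ℝ) ^ (-(1 : ℤ)) := by
      have h5 : ((c + π ^ n * r i : RoI K) : K) - ((c + π ^ n * r j : RoI K) : K)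
          = ((π ^ n * (r i - r j) : RoI K) : K) := by push_cast; ring
      have h6 : ‖((π ^ n * (r i - r j) : RoI K) : K)‖ ≤ (q:ℝ) ^ (-((n:ℕ)+1 : ℤ)) := by
        rw [← h5]; exact hmem
      rw [hnormpi] at h6
      have h7 : (q:ℝ) ^ (-((n:ℕ)+1 : ℤ)) = (q:ℝ) ^ (-(n:ℤ)) * (q : ℝ) ^ (-(1 : ℤ)) := by
        rw [← zpow_add₀ (ne_of_gt (q_pos_real hq))]
        ring_nf
      rw [h7] at h6
      exact le_of_mul_le_mul_left h6 (radius_pos hq n)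
    have hrij : Ideal.Quotient.mk I (r i) = Ideal.Quotient.mk I (r j) := by
      have : r i - r j ∈ I := (mem_span_iff_norm hq hπ _).mpr hij'
      rwa [← sub_eq_zero, ← map_sub, Ideal.Quotient.eq_zero_iff_mem]
    have : e.symm i = e.symm j := by rw [← hr i, ← hr j, hrij]
    exact e.symm.injective this
  have hmeas : ∀ i, MeasurableSet (D i) := fun i => measurableSet_disc _ _
  rw [hcover, measure_iUnion hdisj hmeas, tsum_fintype]
  have hDval : ∀ i, μ (D i) = μ (disc K q 0 (n + 1)) := fun i =>
    measure_disc_eq_of_center μ _ _ _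
  simp only [hDval]
  rw [Finset.sum_const, Finset.card_univ, Fintype.card_fin, nsmul_eq_mul]

lemma disc_zero_zero : disc K q (0 : RoI K) 0 = Set.univ := by
  ext x
  simp only [disc, Set.mem_setOf_eq, Set.mem_univ, iff_true]
  push_cast
  simpa using norm_le_one x

lemma measure_disc (hq : 1 < q) (hπ : ‖(π : K)‖ = (q : ℝ)⁻¹)
    (hres : Nat.card (↥(RoI K) ⧸ (Ideal.span {π} : Ideal ↥(RoI K))) = q)
    (μ : Measure (RoI K)) [IsProbabilityMeasure μ] [μ.IsAddLeftInvariant]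
    (a : RoI K) (n : ℕ) :
    μ (disc K q a n) = ((q : ℝ≥0∞))⁻¹ ^ n := by
  have hq0 : (q : ℝ≥0∞) ≠ 0 := by
    simp only [ne_eq, Nat.cast_eq_zero]; omega
  have hqt : (q : ℝ≥0∞) ≠ ⊤ := ENNReal.natCast_ne_top q
  have key : ∀ m : ℕ, μ (disc K q (0 : RoI K) m) = ((q : ℝ≥0∞))⁻¹ ^ m := by
    intro m
    induction m with
    | zero => rw [disc_zero_zero, pow_zero, measure_univ]
    | succ m ih =>
      have h1 := measure_disc_succ hq hπ hres μ (0 : RoI K) m (π := π)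
      rw [ih] at h1
      have h2 : μ (disc K q (0:RoI K) (m+1)) = (q : ℝ≥0∞)⁻¹ * ((q : ℝ≥0∞) * μ (disc K q (0:RoI K) (m+1))) := by
        rw [← mul_assoc, ENNReal.inv_mul_cancel hq0 hqt, one_mul]
      rw [pow_succ, mul_comm (((q : ℝ≥0∞))⁻¹ ^ m), h2, ← h1]
  rw [measure_disc_eq_of_center μ a 0 n, key n]

section Defs
variable (q)
/-- The average of `f` over the level-`n` disc around `x`. -/
def avg (μ : Measure (RoI K)) (f : RoI K → ℝ) (x : RoI K) (n : ℕ) : ℝ :=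
  ⨍ y in disc K q x n, f y ∂μ

/-- The inner sum in `VBerk` associated to a disc. -/
def tD (μ : Measure (RoI K)) (f : RoI K → ℝ) (D : {D : Set (RoI K) // IsDisc K q D}) : ℝ≥0∞ :=
  ∑' D' : {D' : Set (RoI K) // IsDisc K q D' ∧ D' ⊆ D.1 ∧ μ D' = μ D.1 / (q : ℝ≥0∞)},
    ENNReal.ofReal |(⨍ x in D'.1, f x ∂μ) - ⨍ x in D.1, f x ∂μ|

lemma VBerk_eq_tsum_tD (q := q) (μ : Measure (RoI K)) (f : RoI K → ℝ) :
    VBerk K q μ f = ∑' D : {D : Set (RoI K) // IsDisc K q D}, tD q μ f D := rfl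

/-- The part of `VBerk` supported on discs inside `disc x N`. -/
def tail (μ : Measure (RoI K)) (f : RoI K → ℝ) (x : RoI K) (N : ℕ) : ℝ≥0∞ :=
  ∑' D : {D : {D : Set (RoI K) // IsDisc K q D} // D.1 ⊆ disc K q x N}, tD q μ f D.1

end Defs

lemma pow_inv_le_iff (hq : 1 < q) {a b : ℕ} :
    ((q : ℝ≥0∞))⁻¹ ^ a ≤ ((q : ℝ≥0∞))⁻¹ ^ b ↔ b ≤ a := by
  have hq1 : (1:ℝ) < q := by exact_mod_cast hq
  have h0 : (0:ℝ) < (q:ℝ)⁻¹ := inv_pos.mpr (by linarith)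
  have h1 : (q:ℝ)⁻¹ < 1 := inv_lt_one_of_one_lt₀ hq1
  have key : ∀ n : ℕ, ((q : ℝ≥0∞))⁻¹ ^ n = ENNReal.ofReal (((q:ℝ)⁻¹) ^ n) := by
    intro n
    rw [ENNReal.ofReal_pow h0.le, ENNReal.ofReal_inv_of_pos (by linarith), ENNReal.ofReal_natCast]
  rw [key, key, ENNReal.ofReal_le_ofReal_iff (by positivity)]
  constructor
  · intro h
    by_contra hab
    push_neg at hab
    exact absurd h (not_le.mpr (pow_lt_pow_right_of_lt_one₀ h0 h1 hab))
  · intro h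
    exact pow_le_pow_of_le_one h0.le h1.le h

lemma disc_level_eq (hq : 1 < q) (hπ : ‖(π : K)‖ = (q : ℝ)⁻¹)
    (hres : Nat.card (↥(RoI K) ⧸ (Ideal.span {π} : Ideal ↥(RoI K))) = q)
    (μ : Measure (RoI K)) [IsProbabilityMeasure μ] [μ.IsAddLeftInvariant]
    {x y : RoI K} {a b : ℕ} (h : disc K q x a = disc K q y b) : a = b := by
  have h1 := congrArg μ h
  rw [measure_disc hq hπ hres μ, measure_disc hq hπ hres μ] at h1
  have h2 := (pow_inv_le_iff hq).mp h1.le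
  have h3 := (pow_inv_le_iff hq).mp h1.ge
  omega

lemma term_le_tD (hq : 1 < q) (hπ : ‖(π : K)‖ = (q : ℝ)⁻¹)
    (hres : Nat.card (↥(RoI K) ⧸ (Ideal.span {π} : Ideal ↥(RoI K))) = q)
    (μ : Measure (RoI K)) [IsProbabilityMeasure μ] [μ.IsAddLeftInvariant]
    (f : RoI K → ℝ) (y : RoI K) (n : ℕ) :
    ENNReal.ofReal |avg q μ f y (n + 1) - avg q μ f y n|
      ≤ tD q μ f ⟨disc K q y n, ⟨y, n, rfl⟩⟩ := by
  have hprop : IsDisc K q (disc K q y (n+1)) ∧ disc K q y (n+1) ⊆ disc K q y n ∧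
      μ (disc K q y (n+1)) = μ (disc K q y n) / (q : ℝ≥0∞) := by
    refine ⟨⟨y, n+1, rfl⟩, disc_antitone hq y (Nat.le_succ n), ?_⟩
    rw [measure_disc hq hπ hres μ, measure_disc hq hπ hres μ, pow_succ, div_eq_mul_inv]
  exact ENNReal.le_tsum (⟨disc K q y (n+1), hprop⟩ :
    {D' : Set (RoI K) // IsDisc K q D' ∧ D' ⊆ disc K q y n ∧
      μ D' = μ (disc K q y n) / (q : ℝ≥0∞)})

lemma tail_le_VBerk (μ : Measure (RoI K)) (f : RoI K → ℝ) (x : RoI K) (N : ℕ) :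
    tail q μ f x N ≤ VBerk K q μ f := by
  rw [VBerk_eq_tsum_tD]
  exact ENNReal.tsum_comp_le_tsum_of_injective Subtype.val_injective (tD q μ f)

lemma sum_terms_le_tail (hq : 1 < q) (hπ : ‖(π : K)‖ = (q : ℝ)⁻¹)
    (hres : Nat.card (↥(RoI K) ⧸ (Ideal.span {π} : Ideal ↥(RoI K))) = q)
    (μ : Measure (RoI K)) [IsProbabilityMeasure μ] [μ.IsAddLeftInvariant]
    (f : RoI K → ℝ) {x y : RoI K} {N : ℕ} (hy : y ∈ disc K q x N) :
    ∑' m : ℕ, ENNReal.ofReal |avg q μ f y (N + m + 1) - avg q μ f y (N + m)| ≤ tail q μ f x N := by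
  have hysub : ∀ m : ℕ, disc K q y (N + m) ⊆ disc K q x N := by
    intro m
    refine (disc_antitone hq y (Nat.le_add_right N m)).trans ?_
    rw [disc_eq_of_mem hq hy]
  set F : ℕ → {D : {D : Set (RoI K) // IsDisc K q D} // D.1 ⊆ disc K q x N} :=
    fun m => ⟨⟨disc K q y (N + m), ⟨y, N + m, rfl⟩⟩, hysub m⟩ with hF
  have hinj : Function.Injective F := by
    intro a b hab
    have h1 : disc K q y (N + a) = disc K q y (N + b) :=
      congrArg (fun z => z.1.1) hab
    have := disc_level_eq hq hπ hres μ h1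
    omega
  calc ∑' m : ℕ, ENNReal.ofReal |avg q μ f y (N + m + 1) - avg q μ f y (N + m)|
      ≤ ∑' m : ℕ, tD q μ f (F m).1 :=
        ENNReal.tsum_le_tsum fun m => term_le_tD hq hπ hres μ f y (N + m)
    _ ≤ tail q μ f x N :=
        ENNReal.tsum_comp_le_tsum_of_injective hinj (fun D => tD q μ f D.1)

lemma tail_tendsto_zero (hq : 1 < q) (hπ : ‖(π : K)‖ = (q : ℝ)⁻¹)
    (hres : Nat.card (↥(RoI K) ⧸ (Ideal.span {π} : Ideal ↥(RoI K))) = q)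
    (μ : Measure (RoI K)) [IsProbabilityMeasure μ] [μ.IsAddLeftInvariant]
    (f : RoI K → ℝ) (hV : VBerk K q μ f ≠ ⊤) (x : RoI K) :
    Tendsto (fun N => tail q μ f x N) atTop (𝓝 0) := by
  classical
  rw [ENNReal.tendsto_nhds_zero]
  intro ε hε
  have htot : ∑' D : {D : Set (RoI K) // IsDisc K q D}, tD q μ f D ≠ ⊤ := by
    rw [← VBerk_eq_tsum_tD]; exact hV
  have hcompl := ENNReal.tendsto_tsum_compl_atTop_zero htot
  obtain ⟨s, hs⟩ : ∃ s : Finset {D : Set (RoI K) // IsDisc K q D},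
      (∑' D : {D : {D : Set (RoI K) // IsDisc K q D} // D ∉ s}, tD q μ f D.1) < ε :=
    (hcompl.eventually (gt_mem_nhds hε)).exists
  set lev : {D : Set (RoI K) // IsDisc K q D} → ℕ := fun D => D.2.choose_spec.choose with hlevdef
  have hlev : ∀ D : {D : Set (RoI K) // IsDisc K q D},
      D.1 = disc K q D.2.choose (lev D) := fun D => D.2.choose_spec.choose_spec
  refine Filter.eventually_atTop.mpr ⟨(s.sup lev) + 1, fun N hN => ?_⟩
  have hnot : ∀ D : {D : Set (RoI K) // IsDisc K q D}, D.1 ⊆ disc K q x N → D ∉ s := by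
    intro D hsub hDs
    have h1 : μ D.1 ≤ μ (disc K q x N) := measure_mono hsub
    rw [hlev D, measure_disc hq hπ hres μ, measure_disc hq hπ hres μ] at h1
    have h2 : N ≤ lev D := (pow_inv_le_iff hq).mp h1
    have h3 : lev D ≤ s.sup lev := Finset.le_sup hDs
    omega
  set G : {D : {D : Set (RoI K) // IsDisc K q D} // D.1 ⊆ disc K q x N} →
      {D : {D : Set (RoI K) // IsDisc K q D} // D ∉ s} :=
    fun D => ⟨D.1, hnot D.1 D.2⟩ with hG
  have hGinj : Function.Injective G := by
    intro a b hab
    have h1 : (G a).1 = (G b).1 := congrArg Subtype.val hab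
    exact Subtype.ext h1
  calc tail q μ f x N = ∑' D : {D : {D : Set (RoI K) // IsDisc K q D} // D.1 ⊆ disc K q x N},
        tD q μ f (G D).1 := rfl
    _ ≤ ∑' D : {D : {D : Set (RoI K) // IsDisc K q D} // D ∉ s}, tD q μ f D.1 :=
        ENNReal.tsum_comp_le_tsum_of_injective hGinj (fun D => tD q μ f D.1)
    _ ≤ ε := hs.le

lemma doubling_bound (hq : 1 < q) (hπ : ‖(π : K)‖ = (q : ℝ)⁻¹)
    (hunif : ∀ x : RoI K, ‖(x : K)‖ < 1 → ‖(x : K)‖ ≤ ‖(π : K)‖)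
    (hres : Nat.card (↥(RoI K) ⧸ (Ideal.span {π} : Ideal ↥(RoI K))) = q)
    (μ : Measure (RoI K)) [IsProbabilityMeasure μ] [μ.IsAddLeftInvariant]
    {ε : ℝ} (hε : 0 < ε) (x : RoI K) :
    μ (Metric.closedBall x (2 * ε)) ≤ (q : ℝ≥0∞) * μ (Metric.closedBall x ε) := by
  classical
  have hq1 : (1:ℝ) < q := by exact_mod_cast hq
  have h2ε : 0 < 2 * ε := by linarith
  have hex : ∃ n : ℕ, (q:ℝ) ^ (-(n:ℤ)) ≤ 2 * ε := by
    obtain ⟨n, hn⟩ := exists_pow_lt_of_lt_one h2ε (inv_lt_one_of_one_lt₀ hq1)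
    exact ⟨n, by rw [← inv_pow_eq_zpow]; exact hn.le⟩
  set n := Nat.find hex with hn
  have hn1 : (q:ℝ) ^ (-(n:ℤ)) ≤ 2 * ε := Nat.find_spec hex
  have hmin : ∀ k : ℕ, (q:ℝ) ^ (-(k:ℤ)) ≤ 2 * ε → n ≤ k := fun k hk => Nat.find_min' hex hk
  have hball : Metric.closedBall x (2 * ε) = disc K q x n := by
    apply Set.Subset.antisymm
    · intro y hy
      rw [Metric.mem_closedBall, Subtype.dist_eq, dist_eq_norm] at hy
      by_cases h0 : (y : K) - (x : K) = 0
      · show ‖(y : K) - (x : K)‖ ≤ _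
        rw [h0, norm_zero]
        exact (radius_pos hq n).le
      · have h0' : ((y - x : RoI K) : K) ≠ 0 := by push_cast; exact h0
        obtain ⟨k, hk⟩ := norm_discrete hq hπ hunif (y - x) h0'
        have hk' : ‖(y : K) - (x : K)‖ = (q:ℝ) ^ (-(k:ℤ)) := by
          rw [← hk]; push_cast; ring_nf
        have hnk : n ≤ k := hmin k (by rw [← hk']; exact hy)
        show ‖(y : K) - (x : K)‖ ≤ _
        rw [hk']
        exact zpow_le_zpow_right₀ (by exact_mod_cast hq.le) (by omega)
    · intro y hy
      rw [Metric.mem_closedBall, Subtype.dist_eq, dist_eq_norm]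
      exact le_trans hy hn1
  have hq2 : (2:ℝ) ≤ q := by exact_mod_cast hq
  have hrad : (q:ℝ) ^ (-((n:ℕ)+1 : ℤ)) ≤ ε := by
    have e1 : (q:ℝ) ^ (-((n:ℕ)+1 : ℤ)) = (q:ℝ) ^ (-(n:ℤ)) * (q:ℝ)⁻¹ := by
      rw [← zpow_neg_one, ← zpow_add₀ (by linarith : (q:ℝ) ≠ 0)]
      ring_nf
    rw [e1]
    have e2 : (q:ℝ) ^ (-(n:ℤ)) * (q:ℝ)⁻¹ ≤ (2 * ε) * (q:ℝ)⁻¹ :=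
      mul_le_mul_of_nonneg_right hn1 (by positivity)
    have e3 : (q:ℝ)⁻¹ ≤ 2⁻¹ := by
      apply inv_anti₀ <;> linarith
    calc (q:ℝ) ^ (-(n:ℤ)) * (q:ℝ)⁻¹ ≤ (2 * ε) * (q:ℝ)⁻¹ := e2
      _ ≤ (2 * ε) * 2⁻¹ := mul_le_mul_of_nonneg_left e3 (by linarith)
      _ = ε := by ring
  have hsub : disc K q x (n + 1) ⊆ Metric.closedBall x ε := by
    intro y hy
    rw [Metric.mem_closedBall, Subtype.dist_eq, dist_eq_norm]
    exact le_trans hy hrad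
  have hq0 : (q : ℝ≥0∞) ≠ 0 := by simp only [ne_eq, Nat.cast_eq_zero]; omega
  have hqt : (q : ℝ≥0∞) ≠ ⊤ := ENNReal.natCast_ne_top q
  calc μ (Metric.closedBall x (2 * ε)) = μ (disc K q x n) := by rw [hball]
    _ = ((q : ℝ≥0∞))⁻¹ ^ n := measure_disc hq hπ hres μ x n
    _ = (q : ℝ≥0∞) * ((q : ℝ≥0∞))⁻¹ ^ (n + 1) := by
        rw [pow_succ, ← mul_assoc, mul_comm (q : ℝ≥0∞) (((q : ℝ≥0∞))⁻¹ ^ n), mul_assoc,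
          ENNReal.mul_inv_cancel hq0 hqt, mul_one]
    _ = (q : ℝ≥0∞) * μ (disc K q x (n + 1)) := by rw [measure_disc hq hπ hres μ x (n + 1)]
    _ ≤ (q : ℝ≥0∞) * μ (Metric.closedBall x ε) :=
        mul_le_mul_right (measure_mono hsub) _

lemma ae_tendsto_avg [SecondCountableTopology (RoI K)] (hq : 1 < q)
    (μ : Measure (RoI K)) [IsProbabilityMeasure μ] [IsUnifLocDoublingMeasure μ]
    (f : RoI K → ℝ) (hf : Integrable f μ) :
    ∀ᵐ x ∂μ, Tendsto (fun n => avg q μ f x n) atTop (𝓝 (f x)) := by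
  have hq1 : (1:ℝ) < q := by exact_mod_cast hq
  have hdel : Tendsto (fun n : ℕ => (q:ℝ) ^ (-(n:ℤ))) atTop (𝓝[>] 0) := by
    rw [tendsto_nhdsWithin_iff]
    constructor
    · have h := tendsto_pow_atTop_nhds_zero_of_lt_one (by positivity : (0:ℝ) ≤ (q:ℝ)⁻¹)
        (inv_lt_one_of_one_lt₀ hq1)
      exact h.congr fun n => inv_pow_eq_zpow n
    · exact Eventually.of_forall fun n => radius_pos hq n
  filter_upwards [IsUnifLocDoublingMeasure.ae_tendsto_average μ hf.locallyIntegrable 1] with x hx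
  have hmem : ∀ᶠ n : ℕ in atTop, x ∈ Metric.closedBall x (1 * (q:ℝ) ^ (-(n:ℤ))) :=
    Eventually.of_forall fun n => by
      rw [Metric.mem_closedBall, dist_self, one_mul]
      exact (radius_pos hq n).le
  have h := hx (fun _ : ℕ => x) (fun n => (q:ℝ) ^ (-(n:ℤ))) hdel hmem
  refine h.congr fun n => ?_
  rw [avg, disc_eq_closedBall]

end Aux2

theorem VBerk_finite_ae_eq_continuous
    (hq : 1 < q)
    (hπ : ‖(π : K)‖ = (q : ℝ)⁻¹)
    (hunif : ∀ x : RoI K, ‖(x : K)‖ < 1 → ‖(x : K)‖ ≤ ‖(π : K)‖)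
    (hres : Nat.card (↥(RoI K) ⧸ (Ideal.span {π} : Ideal ↥(RoI K))) = q)
    (μ : Measure (RoI K)) [IsProbabilityMeasure μ] [μ.IsAddHaarMeasure]
    (f : RoI K → ℝ) (hf : Integrable f μ) (hV : VBerk K q μ f < ⊤) :
    ∃! g : RoI K → ℝ, Continuous g ∧ f =ᵐ[μ] g := by
  classical
  haveI : ProperSpace K :=
    ProperSpace.of_nontriviallyNormedField_of_weaklyLocallyCompactSpace K
  haveI hsc : SecondCountableTopology (RoI K) :=
    TopologicalSpace.Subtype.secondCountableTopology {x : K | x ∈ RoI K}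
  haveI hdbl : IsUnifLocDoublingMeasure μ := by
    refine ⟨⟨(q : ℝ≥0), ?_⟩⟩
    filter_upwards [self_mem_nhdsWithin] with ε hε
    intro x
    have h := doubling_bound hq hπ hunif hres μ (hε : (0:ℝ) < ε) x
    simpa using h
  have hVne : VBerk K q μ f ≠ ⊤ := hV.ne
  have htail_fin : ∀ (x : RoI K) (N : ℕ), tail q μ f x N ≠ ⊤ := fun x N =>
    ((tail_le_VBerk μ f x N).trans_lt hV).ne
  -- pointwise summability of increments
  have hsum : ∀ y : RoI K, Summable (fun n => |avg q μ f y (n + 1) - avg q μ f y n|) := by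
    intro y
    have h1 := sum_terms_le_tail hq hπ hres μ f (mem_disc_self hq y 0)
    have h3 : (∑' m : ℕ, ENNReal.ofReal |avg q μ f y (m + 1) - avg q μ f y m|) ≠ ⊤ := by
      refine ne_of_lt (lt_of_le_of_lt ?_ ((tail_le_VBerk μ f y 0).trans_lt hV))
      refine le_trans (le_of_eq ?_) h1
      congr 1
      ext m
      rw [Nat.zero_add]
    have h4 := ENNReal.summable_toReal h3
    refine h4.congr fun n => ?_
    rw [ENNReal.toReal_ofReal (abs_nonneg _)]
  have hsum' : ∀ y : RoI K, Summable (fun n => avg q μ f y (n + 1) - avg q μ f y n) :=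
    fun y => (hsum y).of_abs
  set g : RoI K → ℝ :=
    fun y => avg q μ f y 0 + ∑' n : ℕ, (avg q μ f y (n + 1) - avg q μ f y n) with hgdef
  -- everywhere convergence of the averages to g
  have hconv : ∀ y : RoI K, Tendsto (fun n => avg q μ f y n) atTop (𝓝 (g y)) := by
    intro y
    have hS := (hsum' y).hasSum.tendsto_sum_nat
    have heq : ∀ n : ℕ, ∑ m ∈ Finset.range n, (avg q μ f y (m + 1) - avg q μ f y m)
        = avg q μ f y n - avg q μ f y 0 := fun n =>
      Finset.sum_range_sub (fun m => avg q μ f y m) n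
    have h2 : Tendsto (fun n => avg q μ f y 0
        + ∑ m ∈ Finset.range n, (avg q μ f y (m + 1) - avg q μ f y m)) atTop (𝓝 (g y)) :=
      tendsto_const_nhds.add hS
    refine h2.congr fun n => ?_
    rw [heq n]
    ring
  -- the tail bound
  have hgap : ∀ (x : RoI K) (N : ℕ) (y : RoI K), y ∈ disc K q x N →
      |g y - avg q μ f y N| ≤ (tail q μ f x N).toReal := by
    intro x N y hy
    set d : ℕ → ℝ := fun n => avg q μ f y (n + 1) - avg q μ f y n with hd
    have htails : Summable fun m => |d (N + m)| :=
      (hsum y).comp_injective (add_right_injective N)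
    have htails' : Summable fun m => d (N + m) := htails.of_abs
    have h1 : g y - avg q μ f y N = ∑' m : ℕ, d (N + m) := by
      have hA : Tendsto (fun n => avg q μ f y (N + n)) atTop (𝓝 (g y)) := by
        have := (hconv y).comp (tendsto_add_atTop_nat N)
        refine this.congr fun n => ?_
        simp [Function.comp, Nat.add_comm]
      have hB : Tendsto (fun n => avg q μ f y (N + n)) atTop
          (𝓝 (avg q μ f y N + ∑' m : ℕ, d (N + m))) := by
        have hS := htails'.hasSum.tendsto_sum_nat
        have heq : ∀ n : ℕ, ∑ m ∈ Finset.range n, d (N + m)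
            = avg q μ f y (N + n) - avg q μ f y N := by
          intro n
          exact Finset.sum_range_sub (fun m => avg q μ f y (N + m)) n
        have h2 : Tendsto (fun n => avg q μ f y N + ∑ m ∈ Finset.range n, d (N + m)) atTop
            (𝓝 (avg q μ f y N + ∑' m : ℕ, d (N + m))) := tendsto_const_nhds.add hS
        refine Tendsto.congr (fun n => ?_) h2
        rw [heq n]
        ring
      have := tendsto_nhds_unique hA hB
      rw [this]
      ring
    rw [h1]
    have h2 : |∑' m : ℕ, d (N + m)| ≤ ∑' m : ℕ, |d (N + m)| := by
      have := norm_tsum_le_tsum_norm (f := fun m => d (N + m))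
        (by simpa [Real.norm_eq_abs] using htails)
      simpa [Real.norm_eq_abs] using this
    refine h2.trans ?_
    have h3 : (∑' m : ℕ, ENNReal.ofReal |d (N + m)|) ≤ tail q μ f x N := by
      exact sum_terms_le_tail hq hπ hres μ f hy
    have h4 : ∑' m : ℕ, |d (N + m)| = (∑' m : ℕ, ENNReal.ofReal |d (N + m)|).toReal := by
      rw [← ENNReal.ofReal_tsum_of_nonneg (fun m => abs_nonneg _) htails,
        ENNReal.toReal_ofReal (tsum_nonneg fun m => abs_nonneg _)]
    rw [h4]
    exact ENNReal.toReal_mono (htail_fin x N) h3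
  -- continuity of g
  have hgc : Continuous g := by
    rw [Metric.continuous_iff]
    intro x ε hε
    have ht0 := tail_tendsto_zero hq hπ hres μ f hVne x
    have hev : ∀ᶠ N in atTop, tail q μ f x N < ENNReal.ofReal (ε / 3) :=
      ht0.eventually (gt_mem_nhds (by simp [ENNReal.ofReal_pos]; linarith))
    obtain ⟨N, hN⟩ := hev.exists
    refine ⟨(q:ℝ) ^ (-(N:ℤ)), radius_pos hq N, fun y hyd => ?_⟩
    have hy : y ∈ disc K q x N := by
      show ‖(y : K) - (x : K)‖ ≤ _
      rw [← dist_eq_norm, ← Subtype.dist_eq]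
      exact hyd.le
    have h1 := hgap x N y hy
    have h2 := hgap x N x (mem_disc_self hq x N)
    have h3 : avg q μ f y N = avg q μ f x N := by
      rw [avg, avg, disc_eq_of_mem hq hy]
    have h4 : (tail q μ f x N).toReal < ε / 3 := by
      rw [← ENNReal.toReal_ofReal (by linarith : (0:ℝ) ≤ ε / 3)]
      exact ENNReal.toReal_strict_mono (by simp) hN
    rw [Real.dist_eq]
    have h2' : |avg q μ f y N - g x| ≤ (tail q μ f x N).toReal := by
      rw [h3, abs_sub_comm]
      exact h2
    calc |g y - g x| ≤ |g y - avg q μ f y N| + |avg q μ f y N - g x| := abs_sub_le _ _ _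
      _ < ε := by linarith
  -- a.e. equality
  have hae : f =ᵐ[μ] g := by
    filter_upwards [ae_tendsto_avg hq μ f hf] with x hx
    exact tendsto_nhds_unique hx (hconv x)
  refine ⟨g, ⟨hgc, hae⟩, ?_⟩
  rintro g' ⟨hg'c, hg'ae⟩
  exact (Continuous.ae_eq_iff_eq μ hg'c hgc).mp (hg'ae.symm.trans hae)


end NAKoksma
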